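/- Let d, n be positive integers, let e_1, …, e_n ∈ ℝ^d, let u, v, w ∈ ℝⁿ and y, η, ζ ∈ ℝ^d. Define a_j = (v_j + 2πi·u_j·⟨e_j, η⟩)·e^{2πi⟨e_j, y⟩} ∈ ℂ and b_j = (w_j + 2πi·u_j·⟨e_j, ζ⟩)·e^{2πi⟨e_j, y⟩} ∈ ℂ for j = 1, …, n, where ⟨·,·⟩ is the standard inner product on ℝ^d. If Σ_{j=1}^n u_j v_j e_j = 0 and Σ_{j=1}^n u_j w_j e_j = 0 in ℝ^d, then Σ_{j=1}^n Im(conj(a_j)·b_j) = 0. (This says that Mironov's map φ(u, y) = (u_1 e^{2πi⟨e_1,y⟩}, …, u_n e^{2πi⟨e_n,y⟩}) is a Lagrangian immersion: the pullback of the standard symplectic form ω = Σ dx^j ∧ dy^j on ℂⁿ vanishes on tangent vectors to M × ℝ^d, where M is the submanifold cut out by the quadrics Σ_j e_{j i} u_j² = d_i.) -/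

import Mathlib

open Real Complex

/-- Mironov's map `φ(u, y) = (u₁ e^{2πi⟨e₁,y⟩}, …, uₙ e^{2πi⟨eₙ,y⟩})` is a Lagrangian
immersion: for tangent vectors `(v, η)` and `(w, ζ)` to `M × ℝ^d` at `(u, y)` (tangency
to `M` being expressed by `∑ uⱼvⱼeⱼ = 0` and `∑ uⱼwⱼeⱼ = 0`), the standard symplectic
form `ω(a, b) = ∑ Im(conj(aⱼ)·bⱼ)` vanishes on the corresponding image vectors
`aⱼ = (vⱼ + 2πi·uⱼ·⟨eⱼ,η⟩)·e^{2πi⟨eⱼ,y⟩}` and `bⱼ = (wⱼ + 2πi·uⱼ·⟨eⱼ,ζ⟩)·e^{2πi⟨eⱼ,y⟩}`. -/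
theorem mironov_lagrangian (d n : ℕ) (hd : 0 < d) (hn : 0 < n)
    (e : Fin n → EuclideanSpace ℝ (Fin d)) (u v w : Fin n → ℝ)
    (y η ζ : EuclideanSpace ℝ (Fin d))
    (a b : Fin n → ℂ)
    (ha : ∀ j, a j = ((v j : ℂ) + 2 * Real.pi * Complex.I * u j * (inner ℝ (e j) η : ℝ)) *
      Complex.exp (2 * Real.pi * Complex.I * (inner ℝ (e j) y : ℝ)))
    (hb : ∀ j, b j = ((w j : ℂ) + 2 * Real.pi * Complex.I * u j * (inner ℝ (e j) ζ : ℝ)) *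
      Complex.exp (2 * Real.pi * Complex.I * (inner ℝ (e j) y : ℝ)))
    (hv : ∑ j, (u j * v j) • e j = 0)
    (hw : ∑ j, (u j * w j) • e j = 0) :
    ∑ j, ((starRingEnd ℂ) (a j) * b j).im = 0 := by
  have hv' : ∑ j, u j * v j * (inner ℝ (e j) ζ : ℝ) = 0 := by
    have := congrArg (fun x : EuclideanSpace ℝ (Fin d) => (inner ℝ x ζ : ℝ)) hv
    simpa [sum_inner, real_inner_smul_left, Finset.mul_sum, mul_assoc] using this
  have hw' : ∑ j, u j * w j * (inner ℝ (e j) η : ℝ) = 0 := by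
    have := congrArg (fun x : EuclideanSpace ℝ (Fin d) => (inner ℝ x η : ℝ)) hw
    simpa [sum_inner, real_inner_smul_left, Finset.mul_sum, mul_assoc] using this
  have key : ∀ j, ((starRingEnd ℂ) (a j) * b j).im
      = 2 * Real.pi * (u j * v j * (inner ℝ (e j) ζ : ℝ))
        - 2 * Real.pi * (u j * w j * (inner ℝ (e j) η : ℝ)) := by
    intro j
    rw [ha, hb]
    set t : ℝ := (inner ℝ (e j) y : ℝ)
    have hE : (starRingEnd ℂ) (Complex.exp (2 * Real.pi * Complex.I * t)) *
        Complex.exp (2 * Real.pi * Complex.I * t) = 1 := by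
      rw [← Complex.exp_conj, ← Complex.exp_add]
      simp [map_ofNat]
    rw [map_mul, mul_mul_mul_comm, hE, mul_one]
    simp [Complex.mul_im, Complex.mul_re]
    ring
  simp only [key]
  rw [Finset.sum_sub_distrib, ← Finset.mul_sum, ← Finset.mul_sum, hv', hw']
  ring
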